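/- The duality formula for c-matrices under one Coxeter-twist: for a cluster algebra A(B^c; t_0) with trivial coefficients, any cluster variable x and non-labeled cluster [x] containing x, the c-vector satisfies c^{B^c;t_0}_{τ_c^{-1}(x), τ_c^{-1}([x])} = -c^{-B^c;t_0}_{x,[x]}, where τ_c^{-1} acts on clusters via the mutation sequence μ ∘ μ_{c_1} ∘ ⋯ ∘ μ_{c_n} when [x] = μ(x_{t_0}). -/

import Mathlib

/-- Mutation in direction `k` of an extended integer matrix (rows `Fin n ⊕ Fin n`:
exchange-matrix block on top and `C`-matrix block below). -/
def extMut {n : ℕ} (A : Matrix (Fin n ⊕ Fin n) (Fin n) ℤ) (k : Fin n) :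
    Matrix (Fin n ⊕ Fin n) (Fin n) ℤ :=
  fun i j => if i = Sum.inl k ∨ j = k then -A i j
    else A i j + max (A i k) 0 * A (Sum.inl k) j + A i k * max (-A (Sum.inl k) j) 0

/-- The extended matrix `[B; I_n]`. -/
def extOf {n : ℕ} (B : Matrix (Fin n) (Fin n) ℤ) : Matrix (Fin n ⊕ Fin n) (Fin n) ℤ :=
  fun i j => Sum.elim (fun r => B r j) (fun r => if r = j then 1 else 0) i

/-- The skew-symmetrizable matrix `B^c` attached to a Cartan matrix `C` and a Coxeter
element `c = c_1 ⋯ c_n` with `c_k = s_{w k}`. -/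
def Bc {n : ℕ} (C : Matrix (Fin n) (Fin n) ℤ) (w : Equiv.Perm (Fin n)) :
    Matrix (Fin n) (Fin n) ℤ :=
  fun i j => if i = j then 0 else if w.symm j < w.symm i then C i j else -C i j

/-- The extended matrix obtained from `[B^c; I_n]` by applying the full Coxeter
mutation sequence `μ_{c_1} ∘ ⋯ ∘ μ_{c_n}` (rightmost applied first); by Proposition
on the interpretation of `τ_c`, mutating further along `μ` computes the labeled seed
of `τ_c⁻¹` of the cluster reached by `μ`. -/
def coxTwisted {n : ℕ} (C : Matrix (Fin n) (Fin n) ℤ) (w : Equiv.Perm (Fin n)) :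
    Matrix (Fin n ⊕ Fin n) (Fin n) ℤ :=
  (List.ofFn fun k : Fin n => w k).foldr (fun idx A => extMut A idx) (extOf (Bc C w))

def eps {n : ℕ} (w : Equiv.Perm (Fin n)) (m : ℕ) (j : Fin n) : ℤ :=
  if m ≤ (w.symm j : ℕ) then -1 else 1

def Mt {n : ℕ} (C : Matrix (Fin n) (Fin n) ℤ) (w : Equiv.Perm (Fin n)) (m : ℕ) :
    Matrix (Fin n ⊕ Fin n) (Fin n) ℤ :=
  fun i j => Sum.elim (fun i' => eps w m i' * eps w m j * Bc C w i' j)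
    (fun s => eps w m j * (if s = j then 1 else 0)) i

lemma maxHelper (a b : ℤ) (ha : 0 ≤ a) (hb : b ≤ 0) :
    max a 0 * b + a * max (-b) 0 = 0 := by
  rw [max_eq_left ha, max_eq_left (by linarith : (0:ℤ) ≤ -b)]; ring

lemma mut_flip (x y : ℤ) :
    max (-x) 0 * (-y) + (-x) * max y 0 = -(max x 0 * y + x * max (-y) 0) := by
  rcases le_total x 0 with hx | hx <;> rcases le_total y 0 with hy | hy
  · rw [max_eq_left (by linarith : (0:ℤ) ≤ -x), max_eq_right hy,
      max_eq_right hx, max_eq_left (by linarith : (0:ℤ) ≤ -y)]; ring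
  · rw [max_eq_left (by linarith : (0:ℤ) ≤ -x), max_eq_left hy,
      max_eq_right hx, max_eq_right (by linarith : -y ≤ (0:ℤ))]; ring
  · rw [max_eq_right (by linarith : -x ≤ (0:ℤ)), max_eq_right hy,
      max_eq_left hx, max_eq_left (by linarith : (0:ℤ) ≤ -y)]; ring
  · rw [max_eq_right (by linarith : -x ≤ (0:ℤ)), max_eq_left hy,
      max_eq_left hx, max_eq_right (by linarith : -y ≤ (0:ℤ))]; ring

lemma extMut_neg {n : ℕ} (A : Matrix (Fin n ⊕ Fin n) (Fin n) ℤ) (k : Fin n) :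
    extMut (-A) k = -(extMut A k) := by
  funext i j
  simp only [extMut, Matrix.neg_apply, neg_neg]
  split_ifs with h
  · ring
  · linear_combination mut_flip (A i k) (A (Sum.inl k) j)

lemma foldl_extMut_neg {n : ℕ} (l : List (Fin n)) :
    ∀ A : Matrix (Fin n ⊕ Fin n) (Fin n) ℤ, l.foldl extMut (-A) = -(l.foldl extMut A) := by
  induction l with
  | nil => intro A; rfl
  | cons a l ih => intro A; simp only [List.foldl_cons, extMut_neg, ih]

lemma step {n : ℕ} (C : Matrix (Fin n) (Fin n) ℤ)
    (hoff : ∀ i j, i ≠ j → C i j ≤ 0)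
    (w : Equiv.Perm (Fin n)) (m : ℕ) (hm : m < n) :
    extMut (Mt C w (m + 1)) (w ⟨m, hm⟩) = Mt C w m := by
  set k := w ⟨m, hm⟩ with hk
  have hks : (w.symm k : ℕ) = m := by rw [hk, Equiv.symm_apply_apply]
  have hepsk1 : eps w (m+1) k = 1 := by simp [eps, hks]
  have hepsk0 : eps w m k = -1 := by simp [eps, hks]
  have hne : ∀ j' : Fin n, j' ≠ k → (w.symm j' : ℕ) ≠ m := by
    intro j' hj' h
    exact hj' (w.symm.injective (Fin.ext (by rw [hks]; exact h)))
  have hepsj : ∀ j' : Fin n, j' ≠ k → eps w (m+1) j' = eps w m j' := by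
    intro j' hj'
    have := hne j' hj'
    simp only [eps]; split_ifs <;> first | rfl | omega
  have hb : ∀ j' : Fin n, j' ≠ k → eps w m j' * Bc C w k j' ≤ 0 := by
    intro j' hj'
    have h1 := hne j' hj'
    have hkj : k ≠ j' := Ne.symm hj'
    simp only [Bc, if_neg hkj, eps]
    rcases lt_or_gt_of_ne h1 with h | h
    · rw [if_neg (by omega : ¬ m ≤ (w.symm j' : ℕ)),
        if_pos (by rw [Fin.lt_def, hks]; exact h)]
      simpa using hoff k j' hkj
    · rw [if_pos (by omega : m ≤ (w.symm j' : ℕ)),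
        if_neg (by rw [Fin.lt_def, hks]; omega)]
      have := hoff k j' hkj; linarith
  have ha : ∀ i' : Fin n, i' ≠ k → 0 ≤ eps w m i' * Bc C w i' k := by
    intro i' hi'
    have h1 := hne i' hi'
    simp only [Bc, if_neg hi', eps]
    rcases lt_or_gt_of_ne h1 with h | h
    · rw [if_neg (by omega : ¬ m ≤ (w.symm i' : ℕ)),
        if_neg (by rw [Fin.lt_def, hks]; omega)]
      have := hoff i' k hi'; linarith
    · rw [if_pos (by omega : m ≤ (w.symm i' : ℕ)),
        if_pos (by rw [Fin.lt_def, hks]; exact h)]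
      have := hoff i' k hi'; linarith
  funext i j
  rcases i with i' | s
  · simp only [extMut, Mt, Sum.elim_inl]
    by_cases hik : i' = k <;> by_cases hjk : j = k
    · subst hik; subst hjk
      rw [if_pos (Or.inl rfl)]
      simp [Bc]
    · subst hik
      rw [if_pos (Or.inl rfl), hepsk1, hepsk0, hepsj j hjk]; ring
    · subst hjk
      rw [if_pos (Or.inr rfl), hepsk1, hepsk0, hepsj i' hik]; ring
    · have hcond : ¬ ((Sum.inl i' : Fin n ⊕ Fin n) = Sum.inl k ∨ j = k) := by
        rintro (h | h)
        · exact hik (by injection h)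
        · exact hjk h
      rw [if_neg hcond, hepsk1, hepsj i' hik, hepsj j hjk]
      simp only [mul_one, one_mul]
      linear_combination maxHelper (eps w m i' * Bc C w i' k) (eps w m j * Bc C w k j)
        (ha i' hik) (hb j hjk)
  · simp only [extMut, Mt, Sum.elim_inr, Sum.elim_inl]
    by_cases hjk : j = k
    · subst hjk
      rw [if_pos (Or.inr rfl), hepsk1, hepsk0]; ring
    · have hcond : ¬ ((Sum.inr s : Fin n ⊕ Fin n) = Sum.inl k ∨ j = k) := by
        rintro (h | h)
        · cases h
        · exact hjk h
      rw [if_neg hcond, hepsk1, hepsj j hjk]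
      simp only [mul_one, one_mul]
      by_cases hsk : s = k
      · subst hsk
        rw [if_pos rfl, if_neg (fun h => hjk (h.symm))]
        have hb' := hb j hjk
        rw [max_eq_left (by norm_num : (0:ℤ) ≤ 1),
          max_eq_left (by linarith : (0:ℤ) ≤ -(eps w m j * Bc C w k j))]
        ring
      · rw [if_neg hsk]
        simp
lemma epsn {n : ℕ} (w : Equiv.Perm (Fin n)) (j : Fin n) : eps w n j = 1 := by
  simp [eps, not_le.mpr (w.symm j).isLt]

lemma aux_fold {n : ℕ} (C : Matrix (Fin n) (Fin n) ℤ)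
    (hoff : ∀ i j, i ≠ j → C i j ≤ 0) (w : Equiv.Perm (Fin n)) :
    ∀ d m, m + d = n →
      (List.drop m (List.ofFn fun k : Fin n => w k)).foldr (fun idx A => extMut A idx)
        (extOf (Bc C w)) = Mt C w m := by
  intro d
  induction d with
  | zero =>
    intro m hm
    have hnil : List.drop m (List.ofFn fun k : Fin n => w k) = [] :=
      List.drop_eq_nil_of_le (by simp; omega)
    rw [hnil, List.foldr_nil]
    have hep : ∀ j' : Fin n, eps w m j' = 1 := by
      intro j'
      have := (w.symm j').isLt
      simp only [eps]
      rw [if_neg (by omega)]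
    funext i j
    rcases i with i' | s <;> simp [extOf, Mt, hep]
  | succ d ih =>
    intro m hm
    have hm' : m < n := by omega
    have hlt : m < (List.ofFn fun k : Fin n => w k).length := by simp; omega
    rw [List.drop_eq_getElem_cons hlt, List.foldr_cons, ih (m+1) (by omega),
      List.getElem_ofFn]
    exact step C hoff w m hm'

lemma coxTwisted_eq {n : ℕ} (C : Matrix (Fin n) (Fin n) ℤ)
    (hoff : ∀ i j, i ≠ j → C i j ≤ 0) (w : Equiv.Perm (Fin n)) :
    coxTwisted C w = -(extOf (-(Bc C w))) := by
  have h0 := aux_fold C hoff w n 0 (by omega)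
  rw [List.drop_zero] at h0
  rw [coxTwisted, h0]
  funext i j
  have he : eps w 0 j = -1 := by simp [eps]
  rcases i with i' | s <;>
    simp [Mt, extOf, eps, Matrix.neg_apply] <;>
    split_ifs <;> ring

/-- The duality formula for `c`-vectors under one Coxeter twist: with trivial
coefficients, for any mutation sequence `μ` (a list `l`, applied left to right)
and any position `j`, the `c`-vector of the labeled cluster `τ_c⁻¹(μ(x_{t_0}))`
in the pattern `A(B^c; t_0)` — computed by mutating `[B^c; I_n]` first along the
Coxeter sequence `μ_{c_1} ∘ ⋯ ∘ μ_{c_n}` and then along `l` — is the negative of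
the `c`-vector at the same position of the cluster `μ(x_{t_0})` in the pattern
`A(-B^c; t_0)`:  `c^{B^c;t_0}_{τ_c⁻¹(x), τ_c⁻¹([x])} = - c^{-B^c;t_0}_{x,[x]}`. -/
theorem cVector_coxeter_twist_duality {n : ℕ}
    (C : Matrix (Fin n) (Fin n) ℤ)
    (hdiag : ∀ i, C i i = 2)
    (hoff : ∀ i j, i ≠ j → C i j ≤ 0)
    (hzero : ∀ i j, C i j = 0 ↔ C j i = 0)
    (hsym : ∃ d : Fin n → ℤ, (∀ i, 0 < d i) ∧ ∀ i j, d i * C i j = d j * C j i)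
    (w : Equiv.Perm (Fin n)) (l : List (Fin n)) (j : Fin n) (r : Fin n) :
    (l.foldl extMut (coxTwisted C w)) (Sum.inr r) j
      = -((l.foldl extMut (extOf (-(Bc C w)))) (Sum.inr r) j) := by
  rw [coxTwisted_eq C hoff w, foldl_extMut_neg, Matrix.neg_apply]
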